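/- Let G be a group containing elements σ, δ, s, r such that σδ = δσ, σ⁻¹sσ = δ⁻¹sδ, and σ⁻¹rσ = r. Then for all n ≥ 0, σ⁻ⁿ(sr)ⁿσⁿ = (δ⁻ⁿsδⁿr)ⁿ in G. -/
import Mathlib

theorem stmt_0 {G : Type*} [Group G] (σ δ s r : G)
    (h1 : σ * δ = δ * σ) (h2 : σ⁻¹ * s * σ = δ⁻¹ * s * δ) (h3 : σ⁻¹ * r * σ = r) :
    ∀ n : ℕ, (σ ^ n)⁻¹ * (s * r) ^ n * σ ^ n = ((δ ^ n)⁻¹ * s * δ ^ n * r) ^ n := by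
  have hc : Commute σ δ := h1
  have hs : ∀ n : ℕ, (σ ^ n)⁻¹ * s * σ ^ n = (δ ^ n)⁻¹ * s * δ ^ n := by
    intro n
    induction n with
    | zero => simp
    | succ n ih =>
      have hcd : Commute σ (δ ^ n) := hc.pow_right n
      calc (σ ^ (n+1))⁻¹ * s * σ ^ (n+1)
          = σ⁻¹ * ((σ ^ n)⁻¹ * s * σ ^ n) * σ := by
            rw [pow_succ]; group
        _ = σ⁻¹ * ((δ ^ n)⁻¹ * s * δ ^ n) * σ := by rw [ih]
        _ = (δ ^ n)⁻¹ * (σ⁻¹ * s * σ) * δ ^ n := by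
            calc σ⁻¹ * ((δ ^ n)⁻¹ * s * δ ^ n) * σ
                = σ⁻¹ * (δ ^ n)⁻¹ * s * (δ ^ n * σ) := by group
              _ = σ⁻¹ * (δ ^ n)⁻¹ * s * (σ * δ ^ n) := by rw [← hcd.eq]
              _ = (δ ^ n)⁻¹ * σ⁻¹ * s * (σ * δ ^ n) := by
                    rw [(hcd.inv_left.inv_right).eq]
              _ = (δ ^ n)⁻¹ * (σ⁻¹ * s * σ) * δ ^ n := by group
        _ = (δ ^ (n+1))⁻¹ * s * δ ^ (n+1) := by
            rw [h2, pow_succ]; group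
  have hr : ∀ n : ℕ, (σ ^ n)⁻¹ * r * σ ^ n = r := by
    intro n
    induction n with
    | zero => simp
    | succ n ih =>
      calc (σ ^ (n+1))⁻¹ * r * σ ^ (n+1)
          = σ⁻¹ * ((σ ^ n)⁻¹ * r * σ ^ n) * σ := by rw [pow_succ]; group
        _ = r := by rw [ih, h3]
  intro n
  have key : (σ ^ n)⁻¹ * (s * r) * σ ^ n = (δ ^ n)⁻¹ * s * δ ^ n * r := by
    calc (σ ^ n)⁻¹ * (s * r) * σ ^ n
        = ((σ ^ n)⁻¹ * s * σ ^ n) * ((σ ^ n)⁻¹ * r * σ ^ n) := by group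
      _ = (δ ^ n)⁻¹ * s * δ ^ n * r := by rw [hs, hr]
  calc (σ ^ n)⁻¹ * (s * r) ^ n * σ ^ n
      = ((σ ^ n)⁻¹ * (s * r) * σ ^ n) ^ n := by
        rw [show ((σ ^ n)⁻¹ * (s * r) * σ ^ n) ^ n
            = (σ ^ n)⁻¹ * (s * r) ^ n * ((σ ^ n)⁻¹)⁻¹ by
          rw [← conj_pow]; group]
        group
    _ = ((δ ^ n)⁻¹ * s * δ ^ n * r) ^ n := by rw [key]
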